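/- Let X be a finite set with |X| ≥ 2 and φ : X* → X* a finite-state automorphism of the rooted tree X*. Let Fix_φ denote the fixed-point set of the induced homeomorphism of X^ℕ and let μ be the uniform Bernoulli measure on X^ℕ. Then μ(Fix_φ \ interior(Fix_φ)) = 0. -/

import Mathlib

/-- An automorphism of the rooted tree `X*` of finite words over `X`: a bijection of
`List X` preserving lengths and prefixes. -/
structure TreeAut (X : Type*) where
  toFun : List X → List X
  invFun : List X → List X
  left_inv : Function.LeftInverse invFun toFun
  right_inv : Function.RightInverse invFun toFun
  length_eq : ∀ w : List X, (toFun w).length = w.length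
  take_append : ∀ w v : List X, (toFun (w ++ v)).take w.length = toFun w

/-- The restriction (section) `φ|_w` of a tree automorphism `φ` at the word `w`,
characterised by `φ(w v) = φ(w) φ|_w(v)`. -/
def TreeAut.restrict {X : Type*} (φ : TreeAut X) (w : List X) : List X → List X :=
  fun v => (φ.toFun (w ++ v)).drop w.length

/-- The set `P_k` of words of length `k` fixed by `φ` whose restriction is nontrivial. -/
def TreeAut.badWords {X : Type*} (φ : TreeAut X) (k : ℕ) : Set (List X) :=
  {w : List X | w.length = k ∧ φ.toFun w = w ∧ φ.restrict w ≠ id}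

open MeasureTheory
open scoped ENNReal

/-- The prefix of length `n` of a sequence `x : ℕ → X`, as a word. -/
def prefixWord {X : Type*} (x : ℕ → X) (n : ℕ) : List X :=
  List.ofFn (fun i : Fin n => x i)

/-- The cylinder set of sequences beginning with the word `w`. -/
def cylinder {X : Type*} (w : List X) : Set (ℕ → X) :=
  {x : ℕ → X | prefixWord x w.length = w}

/-- The homeomorphism of `X^ℕ` induced by a tree automorphism `φ`: the `n`-th letter of
`φ(x)` is the `n`-th letter of `φ` applied to the prefix of `x` of length `n + 1`. -/
def TreeAut.seqAct {X : Type*} (φ : TreeAut X) (x : ℕ → X) : ℕ → X :=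
  fun n => (φ.toFun (prefixWord x (n + 1))).getD n (x n)

/-- The fixed-point set in `X^ℕ` of the homeomorphism induced by `φ`. -/
def TreeAut.fixSeq {X : Type*} (φ : TreeAut X) : Set (ℕ → X) :=
  {x : ℕ → X | φ.seqAct x = x}

section Aux
variable {X : Type*}

/-- Any list of given length is `ofFn` of some function. -/
lemma exists_ofFn_eq (l : List X) {n : ℕ} (h : l.length = n) :
    ∃ s : Fin n → X, List.ofFn s = l := by
  subst h; exact ⟨l.get, List.ofFn_get l⟩

lemma fixed_prefix (φ : TreeAut X) {w v : List X} (h : φ.toFun (w ++ v) = w ++ v) :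
    φ.toFun w = w := by
  have h1 := φ.take_append w v
  rw [h, List.take_left] at h1
  exact h1.symm

lemma toFun_append_of_restrict_id (φ : TreeAut X) {p : List X} (hp : φ.restrict p = id)
    (z : List X) : φ.toFun (p ++ z) = φ.toFun p ++ z := by
  have h1 : (φ.toFun (p ++ z)).take p.length = φ.toFun p := φ.take_append p z
  have h2 : (φ.toFun (p ++ z)).drop p.length = z := congrFun hp z
  calc φ.toFun (p ++ z)
      = (φ.toFun (p ++ z)).take p.length ++ (φ.toFun (p ++ z)).drop p.length :=
        (List.take_append_drop _ _).symm
    _ = φ.toFun p ++ z := by rw [h1, h2]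

lemma restrict_append_id (φ : TreeAut X) {p : List X} (hp : φ.restrict p = id) (q : List X) :
    φ.restrict (p ++ q) = id := by
  funext u
  show (φ.toFun ((p ++ q) ++ u)).drop (p ++ q).length = u
  rw [List.append_assoc, toFun_append_of_restrict_id φ hp]
  have hlen : (φ.toFun p).length = p.length := φ.length_eq p
  rw [List.length_append, ← hlen]
  rw [← List.drop_drop, List.drop_left]
  exact List.drop_left

lemma restrict_eq_of_fixed (φ : TreeAut X) {p v : List X} (h : φ.toFun (p ++ v) = p ++ v) :
    φ.restrict p v = v := by
  show (φ.toFun (p ++ v)).drop p.length = v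
  rw [h]; exact List.drop_left

@[simp] lemma prefixWord_length (x : ℕ → X) (n : ℕ) : (prefixWord x n).length = n := by
  simp [prefixWord]

lemma prefixWord_add (x : ℕ → X) (a b : ℕ) :
    prefixWord x (a + b) = prefixWord x a ++ List.ofFn (fun i : Fin b => x (a + i)) := by
  simp [prefixWord, List.ofFn_add, Fin.castAdd, Fin.natAdd]

lemma prefixWord_succ (x : ℕ → X) (n : ℕ) :
    prefixWord x (n + 1) = prefixWord x n ++ [x n] := by
  have := prefixWord_add x n 1
  simpa [List.ofFn_succ] using this

lemma mem_fixSeq_iff (φ : TreeAut X) (x : ℕ → X) :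
    x ∈ φ.fixSeq ↔ ∀ n, φ.toFun (prefixWord x n) = prefixWord x n := by
  constructor
  · intro hx n
    induction n with
    | zero =>
        have : prefixWord x 0 = [] := by simp [prefixWord]
        rw [this]
        have := φ.length_eq []
        exact List.length_eq_zero_iff.mp this
    | succ n ih =>
        have hx' : φ.seqAct x n = x n := congrFun hx n
        have hlen : (φ.toFun (prefixWord x (n+1))).length = n + 1 := by
          rw [φ.length_eq]; simp
        have htake : (φ.toFun (prefixWord x (n+1))).take n = prefixWord x n := by
          have := φ.take_append (prefixWord x n) [x n]
          rw [← prefixWord_succ] at this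
          simpa [ih] using this
        have hget : (φ.toFun (prefixWord x (n+1)))[n]'(by omega) = x n := by
          have : (φ.toFun (prefixWord x (n+1))).getD n (x n) = x n := hx'
          rwa [List.getD_eq_getElem _ _ (by omega)] at this
        have : φ.toFun (prefixWord x (n+1)) =
            (φ.toFun (prefixWord x (n+1))).take n ++ [(φ.toFun (prefixWord x (n+1)))[n]'(by omega)] := by
          conv_lhs => rw [← List.take_append_drop n (φ.toFun (prefixWord x (n+1)))]
          congr 1
          rw [List.drop_eq_getElem_cons (by omega)]
          have : (φ.toFun (prefixWord x (n+1))).drop (n+1) = [] := by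
            apply List.drop_eq_nil_of_le; omega
          rw [this]
        rw [this, htake, hget, ← prefixWord_succ]
  · intro h
    funext n
    show (φ.toFun (prefixWord x (n + 1))).getD n (x n) = x n
    rw [h (n+1), prefixWord_succ]
    rw [List.getD_eq_getElem _ _ (by simp)]
    exact List.getElem_concat_length (by simp) _
end Aux

section Aux2
variable {X : Type*}

lemma mem_cylinder_prefixWord (x : ℕ → X) (k : ℕ) :
    x ∈ _root_.cylinder (prefixWord x k) := by
  show prefixWord x (prefixWord x k).length = prefixWord x k
  rw [prefixWord_length]

lemma isOpen_cylinder [TopologicalSpace X] [DiscreteTopology X] (w : List X) :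
    IsOpen (_root_.cylinder w) := by
  have : _root_.cylinder w
      = ⋂ i : Fin w.length, (fun y : ℕ → X => y i) ⁻¹' {w[(i : ℕ)]} := by
    ext y
    simp only [_root_.cylinder, Set.mem_setOf_eq, Set.mem_iInter, Set.mem_preimage,
      Set.mem_singleton_iff]
    constructor
    · intro h i
      have h2 : (prefixWord y w.length)[(i : ℕ)]'(by simp) = w[(i : ℕ)] :=
        List.getElem_of_eq h _
      simpa [prefixWord, List.getElem_ofFn] using h2
    · intro h
      apply List.ext_getElem (by simp)
      intro n h1 h2
      simpa [prefixWord, List.getElem_ofFn] using h ⟨n, h2⟩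
  rw [this]
  exact isOpen_iInter_of_finite fun i =>
    (continuous_apply (i : ℕ)).isOpen_preimage _ (isOpen_discrete _)

lemma cylinder_subset_fixSeq (φ : TreeAut X) {p : List X} (hfix : φ.toFun p = p)
    (hp : φ.restrict p = id) : _root_.cylinder p ⊆ φ.fixSeq := by
  intro y hy
  have hy' : prefixWord y p.length = p := hy
  rw [mem_fixSeq_iff]
  intro m
  rcases le_or_gt p.length m with h | h
  · obtain ⟨b, rfl⟩ : ∃ b, m = p.length + b := ⟨m - p.length, by omega⟩
    rw [prefixWord_add, hy', toFun_append_of_restrict_id φ hp, hfix]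
  · obtain ⟨b, hb⟩ : ∃ b, p.length = m + b := ⟨p.length - m, by omega⟩
    have : φ.toFun (prefixWord y (m + b)) = prefixWord y (m + b) := by
      rw [← hb, hy', hfix]
    rw [prefixWord_add] at this
    exact fixed_prefix φ this

open Classical in
noncomputable def badFinset [Fintype X] (φ : TreeAut X) (k : ℕ) : Finset (List X) :=
  ((Finset.univ : Finset (Fin k → X)).filter
    (fun f => φ.toFun (List.ofFn f) = List.ofFn f ∧ φ.restrict (List.ofFn f) ≠ id)).image
    List.ofFn

lemma mem_badFinset [Fintype X] {φ : TreeAut X} {k : ℕ} {w : List X} :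
    w ∈ badFinset φ k ↔ w.length = k ∧ φ.toFun w = w ∧ φ.restrict w ≠ id := by
  classical
  simp only [badFinset, Finset.mem_image, Finset.mem_filter, Finset.mem_univ, true_and]
  constructor
  · rintro ⟨f, ⟨h1, h2⟩, rfl⟩
    exact ⟨by simp, h1, h2⟩
  · rintro ⟨hl, h1, h2⟩
    obtain ⟨f, rfl⟩ := exists_ofFn_eq w hl
    exact ⟨f, ⟨h1, h2⟩, rfl⟩

lemma exists_uniform [Nonempty X] (φ : TreeAut X)
    (hfs : (Set.range fun w : List X => φ.restrict w).Finite) :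
    ∃ N : ℕ, 0 < N ∧ ∀ p : List X, φ.restrict p ≠ id →
      ∃ s : Fin N → X, φ.toFun (p ++ List.ofFn s) ≠ p ++ List.ofFn s := by
  classical
  set len : (List X → List X) → ℕ :=
    fun ψ => if h : ∃ v, ψ v ≠ v then (Classical.choose h).length else 0 with hlen
  refine ⟨hfs.toFinset.sup len + 1, Nat.succ_pos _, ?_⟩
  intro p hp
  have hex : ∃ v, φ.restrict p v ≠ v := by
    by_contra hc
    push_neg at hc
    exact hp (funext hc)
  set v := Classical.choose hex with hv
  have hvne : φ.restrict p v ≠ v := Classical.choose_spec hex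
  have hmem : φ.restrict p ∈ hfs.toFinset := by
    rw [Set.Finite.mem_toFinset]; exact ⟨p, rfl⟩
  have hle : v.length ≤ hfs.toFinset.sup len + 1 := by
    have : len (φ.restrict p) = v.length := by rw [hlen]; simp only [dif_pos hex]; rfl
    have := Finset.le_sup (f := len) hmem
    omega
  set N := hfs.toFinset.sup len + 1
  set l := v ++ List.replicate (N - v.length) (Classical.arbitrary X) with hl
  have hllen : l.length = N := by simp [hl]; omega
  obtain ⟨s, hs⟩ := exists_ofFn_eq l hllen
  refine ⟨s, ?_⟩
  rw [hs, hl, ← List.append_assoc]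
  intro hfix
  exact hvne (restrict_eq_of_fixed φ (fixed_prefix φ hfix))

end Aux2

section Aux3
variable {X : Type*}

open Classical in
lemma decomp_word [Nonempty X] {w : List X} {k N : ℕ} (hw : w.length = k + N) :
    w = w.take k ++ List.ofFn (fun i : Fin N => w.getD (k + i) (Classical.arbitrary X)) := by
  conv_lhs => rw [← List.take_append_drop k w]
  congr 1
  apply List.ext_getElem (by simp [hw])
  intro n h1 h2
  have hkn : k + n < w.length := by simp at h1; omega
  rw [List.getElem_drop]
  simp only [List.getElem_ofFn]
  rw [List.getD_eq_getElem _ _ hkn]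

open Classical in
lemma card_badFinset_step [Fintype X] [Nonempty X] (φ : TreeAut X) {N : ℕ}
    (hN : ∀ p : List X, φ.restrict p ≠ id →
      ∃ s : Fin N → X, φ.toFun (p ++ List.ofFn s) ≠ p ++ List.ofFn s) (k : ℕ) :
    (badFinset φ (k + N)).card ≤ (badFinset φ k).card * (Fintype.card X ^ N - 1) := by
  classical
  set d : X := Classical.arbitrary X
  set exc : List X → (Fin N → X) := fun p =>
    if h : ∃ s : Fin N → X, φ.toFun (p ++ List.ofFn s) ≠ p ++ List.ofFn s then
      Classical.choose h else Classical.arbitrary _ with hexc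
  set T : Finset (List X × (Fin N → X)) :=
    ((badFinset φ k) ×ˢ (Finset.univ : Finset (Fin N → X))).filter
      (fun ps => ps.2 ≠ exc ps.1) with hT
  set f : List X → List X × (Fin N → X) :=
    fun w => (w.take k, fun i : Fin N => w.getD (k + i) d) with hf
  have key : ∀ w ∈ badFinset φ (k + N), f w ∈ T := by
    intro w hw
    obtain ⟨hwl, hwfix, hwres⟩ := mem_badFinset.mp hw
    have hdec := decomp_word (w := w) (k := k) (N := N) hwl
    have htl : (w.take k).length = k := by simp [hwl]
    have hpfix : φ.toFun (w.take k) = w.take k := by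
      apply fixed_prefix (v := List.ofFn (fun i : Fin N => w.getD (k + i) d))
      rw [← hdec]; exact hwfix
    have hpres : φ.restrict (w.take k) ≠ id := by
      intro hid
      apply hwres
      rw [hdec]
      exact restrict_append_id φ hid _
    rw [hT, Finset.mem_filter]
    refine ⟨Finset.mem_product.mpr ⟨mem_badFinset.mpr ⟨htl, hpfix, hpres⟩,
      Finset.mem_univ _⟩, ?_⟩
    intro heq
    have hex := hN (w.take k) hpres
    have hchoose : φ.toFun (w.take k ++ List.ofFn (exc (w.take k)))
        ≠ w.take k ++ List.ofFn (exc (w.take k)) := by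
      rw [hexc]
      simp only [dif_pos hex]
      exact Classical.choose_spec hex
    apply hchoose
    show φ.toFun (w.take k ++ List.ofFn (exc (f w).1)) = _
    rw [← heq]
    show φ.toFun (w.take k ++ List.ofFn (f w).2) = _
    rw [hf]
    simp only
    rw [← hdec, hwfix, hdec]
  have hinj : Set.InjOn f (badFinset φ (k + N)) := by
    intro w1 h1 w2 h2 heq
    obtain ⟨hl1, _, _⟩ := mem_badFinset.mp h1
    obtain ⟨hl2, _, _⟩ := mem_badFinset.mp h2
    rw [decomp_word hl1, decomp_word hl2]
    have e1 : w1.take k = w2.take k := congrArg Prod.fst heq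
    have e2 : (fun i : Fin N => w1.getD (k + i) d) = fun i : Fin N => w2.getD (k + i) d :=
      congrArg Prod.snd heq
    rw [e1, e2]
  have hcard1 : (badFinset φ (k + N)).card ≤ T.card :=
    Finset.card_le_card_of_injOn f key hinj
  -- now bound T.card
  set I : Finset (List X × (Fin N → X)) := (badFinset φ k).image (fun p => (p, exc p)) with hI
  have hIcard : I.card = (badFinset φ k).card :=
    Finset.card_image_of_injective _ (fun a b hab => congrArg Prod.fst hab)
  have hdisj : Disjoint T I := by
    rw [Finset.disjoint_left]
    intro ps hpsT hpsI
    obtain ⟨p, _, rfl⟩ := Finset.mem_image.mp hpsI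
    exact (Finset.mem_filter.mp hpsT).2 rfl
  have hTsub : T ⊆ (badFinset φ k) ×ˢ Finset.univ := Finset.filter_subset _ _
  have hIsub : I ⊆ (badFinset φ k) ×ˢ Finset.univ := by
    intro ps hpsI
    obtain ⟨p, hp, rfl⟩ := Finset.mem_image.mp hpsI
    exact Finset.mem_product.mpr ⟨hp, Finset.mem_univ _⟩
  have hunion : T.card + I.card ≤ (badFinset φ k).card * Fintype.card X ^ N := by
    have h1 : (T ∪ I).card = T.card + I.card := Finset.card_union_of_disjoint hdisj
    have h2 : (T ∪ I) ⊆ (badFinset φ k) ×ˢ Finset.univ := Finset.union_subset hTsub hIsub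
    have h3 := Finset.card_le_card h2
    rw [h1] at h3
    simpa [Finset.card_product, Fintype.card_fun] using h3
  have hc1 : 1 ≤ Fintype.card X ^ N := Nat.one_le_pow _ _ Fintype.card_pos
  have : (badFinset φ k).card * Fintype.card X ^ N
      = (badFinset φ k).card * (Fintype.card X ^ N - 1) + (badFinset φ k).card := by
    conv_lhs => rw [show Fintype.card X ^ N = (Fintype.card X ^ N - 1) + 1 by omega]
    ring
  omega

lemma card_badFinset_pow [Fintype X] [Nonempty X] (φ : TreeAut X) {N : ℕ}
    (hN : ∀ p : List X, φ.restrict p ≠ id →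
      ∃ s : Fin N → X, φ.toFun (p ++ List.ofFn s) ≠ p ++ List.ofFn s) (j : ℕ) :
    (badFinset φ (j * N)).card ≤ (Fintype.card X ^ N - 1) ^ j := by
  induction j with
  | zero =>
      simp only [Nat.zero_mul, pow_zero]
      apply Finset.card_le_one.mpr
      intro a ha b hb
      have ha' := (mem_badFinset.mp ha).1
      have hb' := (mem_badFinset.mp hb).1
      rw [List.length_eq_zero_iff.mp ha', List.length_eq_zero_iff.mp hb']
  | succ j ih =>
      have : (j + 1) * N = j * N + N := by ring
      rw [this, pow_succ]
      calc (badFinset φ (j * N + N)).card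
          ≤ (badFinset φ (j * N)).card * (Fintype.card X ^ N - 1) :=
            card_badFinset_step φ hN _
        _ ≤ (Fintype.card X ^ N - 1) ^ j * (Fintype.card X ^ N - 1) :=
            Nat.mul_le_mul_right _ ih

end Aux3

/-- Let `X` be finite with `|X| ≥ 2`, `φ : X* → X*` a finite-state
automorphism of the rooted tree, `μ` the uniform Bernoulli measure on `X^ℕ` (each
cylinder `wX^ℕ` has mass `|X|^{-|w|}`) and `Fix_φ` the fixed-point set of the induced
homeomorphism of `X^ℕ` (with `X` discrete and the product topology).
Then `μ(Fix_φ \ interior Fix_φ) = 0`. -/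
theorem bernoulli_measure_boundary_of_fixSeq_eq_zero
    {X : Type*} [Fintype X] [TopologicalSpace X] [DiscreteTopology X]
    [MeasurableSpace X] (hX : 2 ≤ Fintype.card X)
    (φ : TreeAut X)
    (hfs : (Set.range fun w : List X => φ.restrict w).Finite)
    (μ : Measure (ℕ → X))
    (hμ : ∀ w : List X, μ (cylinder w) = ((Fintype.card X : ℝ≥0∞))⁻¹ ^ w.length) :
    μ (φ.fixSeq \ interior φ.fixSeq) = 0 := by
  classical
  have hne : Nonempty X := Fintype.card_pos_iff.mp (by omega)
  obtain ⟨N, hN0, hN⟩ := exists_uniform φ hfs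
  set q : ℝ≥0∞ := ((Fintype.card X : ℝ≥0∞))⁻¹ with hq
  set c : ℕ := Fintype.card X ^ N with hc
  have hc2 : 2 ≤ c := le_trans hX (Nat.le_self_pow hN0.ne' _)
  set S : Set (ℕ → X) := φ.fixSeq \ interior φ.fixSeq with hS
  have hsub : ∀ k, S ⊆ ⋃ w ∈ badFinset φ k, _root_.cylinder w := by
    intro k x hx
    obtain ⟨hx1, hx2⟩ := hx
    have hfix := (mem_fixSeq_iff φ x).mp hx1
    have hbadr : φ.restrict (prefixWord x k) ≠ id := by
      intro hid
      exact hx2 (mem_interior.mpr ⟨_root_.cylinder (prefixWord x k),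
        cylinder_subset_fixSeq φ (hfix k) hid, isOpen_cylinder _,
        mem_cylinder_prefixWord x k⟩)
    have hmem : prefixWord x k ∈ badFinset φ k :=
      mem_badFinset.mpr ⟨by simp, hfix k, hbadr⟩
    exact Set.mem_biUnion hmem (mem_cylinder_prefixWord x k)
  have hbound : ∀ j : ℕ, μ S ≤ (((c - 1 : ℕ) : ℝ≥0∞) * q ^ N) ^ j := by
    intro j
    have h1 : μ S ≤ μ (⋃ w ∈ badFinset φ (j * N), _root_.cylinder w) :=
      measure_mono (hsub (j * N))
    have h2 : μ (⋃ w ∈ badFinset φ (j * N), _root_.cylinder w)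
        ≤ ∑ w ∈ badFinset φ (j * N), μ (_root_.cylinder w) :=
      measure_biUnion_finset_le _ _
    have h3 : ∑ w ∈ badFinset φ (j * N), μ (_root_.cylinder w)
        = (badFinset φ (j * N)).card * q ^ (j * N) := by
      rw [Finset.sum_congr rfl (fun w hw => ?_), Finset.sum_const, nsmul_eq_mul]
      rw [hμ w, (mem_badFinset.mp hw).1]
    have h4 : ((badFinset φ (j * N)).card : ℝ≥0∞) ≤ (((c - 1 : ℕ) : ℝ≥0∞)) ^ j := by
      rw [← Nat.cast_pow, Nat.cast_le]
      exact card_badFinset_pow φ hN j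
    calc μ S ≤ (badFinset φ (j * N)).card * q ^ (j * N) := le_trans h1 (le_trans h2 h3.le)
      _ ≤ (((c - 1 : ℕ) : ℝ≥0∞)) ^ j * q ^ (j * N) := mul_le_mul_left h4 _
      _ = (((c - 1 : ℕ) : ℝ≥0∞) * q ^ N) ^ j := by
          rw [mul_pow, ← pow_mul, Nat.mul_comm N j]
  set r : ℝ≥0∞ := ((c - 1 : ℕ) : ℝ≥0∞) * q ^ N with hr
  have hqN : q ^ N = ((c : ℕ) : ℝ≥0∞)⁻¹ := by
    rw [hc, Nat.cast_pow, ← ENNReal.inv_pow]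
  have hr1 : r < 1 := by
    rw [hr, hqN]
    have hc0 : ((c : ℕ) : ℝ≥0∞) ≠ 0 := by
      simp only [ne_eq, Nat.cast_eq_zero]; omega
    have hctop : ((c : ℕ) : ℝ≥0∞) ≠ ⊤ := ENNReal.natCast_ne_top c
    have hlt : (((c - 1 : ℕ)) : ℝ≥0∞) < ((c : ℕ) : ℝ≥0∞) := by
      rw [Nat.cast_lt]; omega
    calc ((c - 1 : ℕ) : ℝ≥0∞) * ((c : ℕ) : ℝ≥0∞)⁻¹
        < ((c : ℕ) : ℝ≥0∞) * ((c : ℕ) : ℝ≥0∞)⁻¹ := by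
          exact ENNReal.mul_lt_mul_left (ENNReal.inv_ne_zero.mpr hctop) (ENNReal.inv_ne_top.mpr hc0) hlt
      _ = 1 := ENNReal.mul_inv_cancel hc0 hctop
  have htend := ENNReal.tendsto_pow_atTop_nhds_zero_of_lt_one hr1
  have : μ S ≤ 0 := ge_of_tendsto' htend hbound
  exact le_antisymm this (zero_le)
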